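/- Let f be a Boolean network whose interaction graph G(f) has no positive cycles. If f has a fixed point y, then f^⟨n⟩(x) = y for every x ∈ {0,1}^n. -/

import Mathlib

open scoped Classical

abbrev BNState (n : ℕ) := Fin n → Bool

def posArc {n : ℕ} (f : BNState n → BNState n) (u v : Fin n) : Prop :=
  ∃ x : BNState n, x u = false ∧ f x v = false ∧ f (Function.update x u true) v = true

def negArc {n : ℕ} (f : BNState n → BNState n) (u v : Fin n) : Prop :=
  ∃ x : BNState n, x u = false ∧ f x v = true ∧ f (Function.update x u true) v = false

def arcSign {n : ℕ} (f : BNState n → BNState n) (u v : Fin n) (s : ℤ) : Prop :=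
  (s = 1 ∧ posArc f u v) ∨ (s = -1 ∧ negArc f u v)

/-- There is a cycle of positive sign in `G(f)` avoiding the vertex set `P`. -/
def hasPosCycleOutside {n : ℕ} (f : BNState n → BNState n) (P : Set (Fin n)) : Prop :=
  ∃ (m : ℕ) (v : Fin (m+1) → Fin n) (s : Fin (m+1) → ℤ),
    Function.Injective v ∧ (∀ i, v i ∉ P) ∧
    (∀ i, arcSign f (v i) (v (i+1)) (s i)) ∧ (∏ i, s i) = 1

/-- There is a cycle (of any sign) in `G(f)` avoiding the vertex set `F`. -/
def hasCycleOutside {n : ℕ} (f : BNState n → BNState n) (F : Set (Fin n)) : Prop :=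
  ∃ (m : ℕ) (v : Fin (m+1) → Fin n) (s : Fin (m+1) → ℤ),
    Function.Injective v ∧ (∀ i, v i ∉ F) ∧
    (∀ i, arcSign f (v i) (v (i+1)) (s i))

/-- `(IC f k).1` is the set `I_k(f)` of components fixed at iteration `k`,
and `(IC f k).2` records the constant values `c_v` (arbitrary off `I_k(f)`). -/
noncomputable def IC {n : ℕ} (f : BNState n → BNState n) :
    ℕ → Set (Fin n) × (Fin n → Bool)
  | 0 => (∅, fun _ => false)
  | k+1 =>
    let I := (IC f k).1
    let c := (IC f k).2
    let g : BNState n → BNState n := fun x => f (fun u => if u ∈ I then c u else x u)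
    ({v | ∀ x y, g x v = g y v}, fun v => g (fun _ => false) v)

/-- The network `f^{I_k}` obtained from `f` by clamping the components of `I_k(f)`. -/
noncomputable def fI {n : ℕ} (f : BNState n → BNState n) (k : ℕ) :
    BNState n → BNState n :=
  fun x => f (fun u => if u ∈ (IC f k).1 then (IC f k).2 u else x u)

/-- Partial evaluation `f^u`: update only component `u`. -/
def seqStep {n : ℕ} (f : BNState n → BNState n) (u : Fin n) (x : BNState n) : BNState n :=
  Function.update x u (f x u)

/-- Sequential update `f^π = f^{π_n} ∘ ⋯ ∘ f^{π_1}`. -/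
def seqUpdate {n : ℕ} (f : BNState n → BNState n) (π : Equiv.Perm (Fin n))
    (x : BNState n) : BNState n :=
  (List.ofFn (fun i => π i)).foldl (fun y u => seqStep f u y) x

lemma arc_of_change {n : ℕ} (f : BNState n → BNState n) (y : BNState n) (v : Fin n)
    (hyv : f y v = y v) :
    ∀ (m : ℕ) (z : BNState n),
      (Finset.univ.filter (fun u => z u ≠ y u)).card ≤ m →
      f z v ≠ y v →
      ∃ u, z u ≠ y u ∧ arcSign f u v (if y u = y v then 1 else -1) := by
  intro m
  induction m with
  | zero =>
      intro z hcard hzv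
      exfalso
      have hzy : z = y := by
        funext u
        by_contra hu
        have hmem : u ∈ Finset.univ.filter (fun u => z u ≠ y u) := by
          simp [hu]
        have := Finset.card_pos.mpr ⟨u, hmem⟩
        omega
      rw [hzy, hyv] at hzv; exact hzv rfl
  | succ m ih =>
      intro z hcard hzv
      have hzy : z ≠ y := by rintro rfl; rw [hyv] at hzv; exact hzv rfl
      have hexu : ∃ u₀, z u₀ ≠ y u₀ := by
        by_contra h; push_neg at h; exact hzy (funext h)
      obtain ⟨u₀, hu₀⟩ := hexu
      set z' := Function.update z u₀ (y u₀) with hz'def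
      have hz'u₀ : z' u₀ = y u₀ := Function.update_self _ _ _
      have hz'other : ∀ u, u ≠ u₀ → z' u = z u := fun u hu => Function.update_of_ne hu _ _
      have hcard' : (Finset.univ.filter (fun u => z' u ≠ y u)).card ≤ m := by
        have hsub : (Finset.univ.filter (fun u => z' u ≠ y u)) ⊆
            (Finset.univ.filter (fun u => z u ≠ y u)).erase u₀ := by
          intro u hu
          simp only [Finset.mem_filter, Finset.mem_erase, Finset.mem_univ, true_and] at *
          rcases eq_or_ne u u₀ with rfl | hne
          · exact absurd hz'u₀ hu
          · exact ⟨hne, by rwa [hz'other u hne] at hu⟩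
        have hm : u₀ ∈ Finset.univ.filter (fun u => z u ≠ y u) := by simp [hu₀]
        have h1 := Finset.card_le_card hsub
        have h2 := Finset.card_erase_of_mem hm
        omega
      by_cases hch : f z' v = f z v
      · obtain ⟨u, hu, harc⟩ := ih z' hcard' (by rwa [hch])
        refine ⟨u, ?_, harc⟩
        have hne : u ≠ u₀ := by
          rintro rfl; rw [hz'u₀] at hu; exact hu rfl
        rwa [hz'other u hne] at hu
      · refine ⟨u₀, hu₀, ?_⟩
        have hfz' : f z' v = y v := by
          cases h1 : f z v <;> cases h2 : f z' v <;> cases h3 : y v <;> simp_all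
        have hfzne : f z v = !(y v) := by
          cases h1 : f z v <;> cases h2 : y v <;> simp_all
        have hzu₀ : z u₀ = !(y u₀) := by
          cases h1 : z u₀ <;> cases h2 : y u₀ <;> simp_all
        have hupz' : Function.update z' u₀ (z u₀) = z := by
          funext u
          rcases eq_or_ne u u₀ with rfl | h
          · simp [Function.update_self]
          · rw [Function.update_of_ne h, hz'other u h]
        cases hyu : y u₀ <;> cases hyv' : y v
        · -- pos, witness z'
          have h5 : z u₀ = true := by rw [hzu₀, hyu]; rfl
          have hupd : Function.update z' u₀ true = z := by rw [← h5, hupz']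
          exact Or.inl ⟨by simp [hyu, hyv'], z', by rw [hz'u₀, hyu], by rw [hfz', hyv'],
            by rw [hupd, hfzne, hyv']; rfl⟩
        · -- neg, witness z'
          have h5 : z u₀ = true := by rw [hzu₀, hyu]; rfl
          have hupd : Function.update z' u₀ true = z := by rw [← h5, hupz']
          exact Or.inr ⟨by simp [hyu, hyv'], z', by rw [hz'u₀, hyu], by rw [hfz', hyv'],
            by rw [hupd, hfzne, hyv']; rfl⟩
        · -- neg, witness z
          have hupz : Function.update z u₀ true = z' := by rw [hz'def, hyu]
          exact Or.inr ⟨by simp [hyu, hyv'], z, by rw [hzu₀, hyu]; rfl,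
            by rw [hfzne, hyv']; rfl, by rw [hupz, hfz', hyv']⟩
        · -- pos, witness z
          have hupz : Function.update z u₀ true = z' := by rw [hz'def, hyu]
          exact Or.inl ⟨by simp [hyu, hyv'], z, by rw [hzu₀, hyu]; rfl,
            by rw [hfzne, hyv']; rfl, by rw [hupz, hfz', hyv']⟩

lemma chain_exists {n : ℕ} (f : BNState n → BNState n) (y : BNState n) (hy : f y = y)
    (x : BNState n) (v0 : Fin n) (h0 : f^[n] x v0 ≠ y v0) :
    ∀ t, t ≤ n → ∃ v : ℕ → Fin n,
      (∀ j, j ≤ t → f^[n - j] x (v j) ≠ y (v j)) ∧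
      (∀ j, j < t → arcSign f (v (j+1)) (v j)
        (if y (v (j+1)) = y (v j) then 1 else -1)) := by
  intro t
  induction t with
  | zero =>
      intro _
      exact ⟨fun _ => v0, fun j hj => by
        interval_cases j; simpa using h0, fun j hj => absurd hj (Nat.not_lt_zero j)⟩
  | succ t ih =>
      intro ht
      obtain ⟨v, hA, hB⟩ := ih (Nat.le_of_succ_le ht)
      have hiter : f^[n - t] x = f (f^[n - (t+1)] x) := by
        have : n - t = (n - (t+1)) + 1 := by omega
        rw [this, Function.iterate_succ_apply']
      have hcard : (Finset.univ.filter
          (fun u => (f^[n - (t+1)] x) u ≠ y u)).card ≤ n := by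
        exact (Finset.card_filter_le _ _).trans (by simp)
      have hne : f (f^[n - (t+1)] x) (v t) ≠ y (v t) := by
        rw [← hiter]; exact hA t le_rfl
      obtain ⟨u, hu, harc⟩ := arc_of_change f y (v t) (by rw [hy]) n
        (f^[n - (t+1)] x) hcard hne
      refine ⟨fun j => if j = t+1 then u else v j, ?_, ?_⟩
      · intro j hj
        rcases eq_or_lt_of_le hj with rfl | hj'
        · simpa using hu
        · have hjt : j ≠ t + 1 := by omega
          simpa [hjt] using hA j (by omega)
      · intro j hj
        rcases eq_or_lt_of_le (Nat.lt_succ_iff.mp hj) with rfl | hj'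
        · have h1 : j + 1 = j + 1 := rfl
          simpa using harc
        · have h1 : j + 1 ≠ t + 1 := by omega
          have h2 : j ≠ t + 1 := by omega
          simpa [h1, h2, show j ≠ t by omega] using hB j hj'

theorem iterate_n_eq_fixedPoint_aux {n : ℕ} (f : BNState n → BNState n)
    (hpos : ¬ (∃ (m : ℕ) (v : Fin (m+1) → Fin n) (s : Fin (m+1) → ℤ),
      Function.Injective v ∧ (∀ i, v i ∉ (∅ : Set (Fin n))) ∧
      (∀ i, arcSign f (v i) (v (i+1)) (s i)) ∧ (∏ i, s i) = 1))
    (y : BNState n) (hy : f y = y) :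
    ∀ x : BNState n, f^[n] x = y := by
  intro x
  by_contra hne
  have hbad : ∃ v, f^[n] x v ≠ y v := by
    by_contra h; push_neg at h; exact hne (funext h)
  obtain ⟨v0, h0⟩ := hbad
  have hn : 0 < n := v0.pos
  obtain ⟨v, hA, hB⟩ := chain_exists f y hy x v0 h0 n le_rfl
  -- pigeonhole
  have hpig : ∃ a b : ℕ, a < b ∧ b ≤ n ∧ v a = v b := by
    have hninj : ¬ Function.Injective (fun k : Fin (n+1) => v k.val) := by
      intro hinj
      have := Fintype.card_le_of_injective _ hinj
      simp at this
    rw [Function.not_injective_iff] at hninj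
    obtain ⟨a, b, heq, hne'⟩ := hninj
    rcases lt_or_gt_of_ne (fun h : a.val = b.val => hne' (Fin.ext h)) with h | h
    · exact ⟨a.val, b.val, h, b.is_le, heq⟩
    · exact ⟨b.val, a.val, h, a.is_le, heq.symm⟩
  obtain ⟨a, b, hab, hbn, hvab⟩ := hpig
  have hQ : ∃ j, ∃ i, i < j ∧ v i = v j := ⟨b, a, hab, hvab⟩
  set j := Nat.find hQ with hjdef
  obtain ⟨i, hij, hvij⟩ := Nat.find_spec hQ
  have hjb : j ≤ b := Nat.find_le ⟨a, hab, hvab⟩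
  have hjn : j ≤ n := le_trans hjb hbn
  have hmin : ∀ c d : ℕ, c < d → d < j → v c ≠ v d := by
    intro c d hcd hdj hvcd
    exact Nat.find_min hQ hdj ⟨c, hcd, hvcd⟩
  set m := j - 1 - i with hmdef
  have hj1 : 1 ≤ j := by omega
  have hm1 : m + 1 = j - i := by omega
  set V : Fin (m+1) → Fin n := fun k => v (j - 1 - (k : ℕ)) with hVdef
  set s : Fin (m+1) → ℤ := fun k => if y (V k) = y (V (k+1)) then 1 else -1 with hsdef
  apply hpos
  refine ⟨m, V, s, ?_, fun i => Set.notMem_empty _, ?_, ?_⟩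
  · -- injective
    intro k l hkl
    have hk : (k : ℕ) ≤ m := Nat.lt_succ_iff.mp k.isLt
    have hl : (l : ℕ) ≤ m := Nat.lt_succ_iff.mp l.isLt
    by_contra hne'
    have hklne : j - 1 - (k:ℕ) ≠ j - 1 - (l:ℕ) := by
      intro h
      exact hne' (Fin.ext (by omega))
    rcases lt_or_gt_of_ne hklne with h | h
    · exact hmin _ _ h (by omega) hkl
    · exact hmin _ _ h (by omega) hkl.symm
  · -- arcs
    intro k
    have hk : (k : ℕ) ≤ m := Nat.lt_succ_iff.mp k.isLt
    have hval : ((k + 1 : Fin (m+1)) : ℕ) = if k = Fin.last m then 0 else (k:ℕ) + 1 :=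
      Fin.val_add_one k
    rcases eq_or_ne k (Fin.last m) with rfl | hklast
    · -- wrap-around arc : from V (last) = v i = v j to V 0 = v (j-1)
      have hv0 : ((Fin.last m + 1 : Fin (m+1)) : ℕ) = 0 := by rw [hval, if_pos rfl]
      have hVlast : V (Fin.last m) = v i := by
        show v (j - 1 - m) = v i
        congr 1; omega
      have hV0 : V (Fin.last m + 1) = v (j - 1) := by
        show v (j - 1 - ((Fin.last m + 1 : Fin (m+1)) : ℕ)) = v (j-1)
        rw [hv0, Nat.sub_zero]
      have harc := hB (j-1) (by omega)
      have hjj : j - 1 + 1 = j := by omega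
      rw [hjj] at harc
      rw [← hvij] at harc
      show arcSign f (V (Fin.last m)) (V (Fin.last m + 1)) (s (Fin.last m))
      rw [hsdef]
      simp only []
      rw [hVlast, hV0]
      exact harc
    · have hkm : (k : ℕ) < m := by
        rcases lt_or_eq_of_le hk with h | h
        · exact h
        · exact absurd (Fin.ext (by simp [h]) : k = Fin.last m) hklast
      have hv1 : ((k + 1 : Fin (m+1)) : ℕ) = (k:ℕ) + 1 := by rw [hval, if_neg hklast]
      have hVk : V k = v ((j - 2 - (k:ℕ)) + 1) := by
        show v (j - 1 - (k:ℕ)) = _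
        congr 1; omega
      have hVk1 : V (k+1) = v (j - 2 - (k:ℕ)) := by
        show v (j - 1 - ((k+1 : Fin (m+1)) : ℕ)) = _
        rw [hv1]; congr 1; omega
      have harc := hB (j - 2 - (k:ℕ)) (by omega)
      show arcSign f (V k) (V (k+1)) (s k)
      rw [hsdef]
      simp only []
      rw [hVk, hVk1]
      exact harc
  · -- product is 1
    have hs : ∀ k, s k = (if y (V k) then (-1:ℤ) else 1) * (if y (V (k+1)) then -1 else 1) := by
      intro k
      rw [hsdef]
      cases h1 : y (V k) <;> cases h2 : y (V (k+1)) <;> simp [h1, h2]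
    calc (∏ k, s k)
        = (∏ k, (if y (V k) then (-1:ℤ) else 1)) *
          (∏ k, (if y (V (k+1)) then (-1:ℤ) else 1)) := by
          rw [← Finset.prod_mul_distrib]; exact Finset.prod_congr rfl (fun k _ => hs k)
      _ = (∏ k, (if y (V k) then (-1:ℤ) else 1)) *
          (∏ k, (if y (V k) then (-1:ℤ) else 1)) := by
          congr 1
          exact Fintype.prod_equiv (Equiv.addRight (1 : Fin (m+1)))
            (fun k => if y (V (k+1)) then (-1:ℤ) else 1)
            (fun k => if y (V k) then (-1:ℤ) else 1) (fun k => rfl)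
      _ = ∏ k, ((if y (V k) then (-1:ℤ) else 1) * (if y (V k) then (-1:ℤ) else 1)) := by
          rw [Finset.prod_mul_distrib]
      _ = 1 := by
          apply Finset.prod_eq_one
          intro k _
          cases h : y (V k) <;> simp [h]

/-- If `f` has no positive cycles and has a fixed point `y`,
then `f^⟨n⟩(x) = y` for every state `x`. -/
theorem iterate_n_eq_fixedPoint {n : ℕ} (f : BNState n → BNState n)
    (hpos : ¬ hasPosCycleOutside f (∅ : Set (Fin n)))
    (y : BNState n) (hy : f y = y) :
    ∀ x : BNState n, f^[n] x = y :=
  iterate_n_eq_fixedPoint_aux f hpos y hy
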